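/- Let f : ℍ → ℍ be continuously real-differentiable on an open set U ⊆ ℍ, and let q₀, q₁ ∈ U be such that the segment joining q₀ and q₁ is contained in U. Set λ := q₁ − q₀. Then f(q₁) − f(q₀) = ∫₀¹ Σ_{η ∈ {1,i,j,k}} (η λ η⁻¹) · (∂ᵣf/∂q^η)(q₀ + t λ) dt, and also f(q₁) − f(q₀) = ∫₀¹ Σ_{η ∈ {1,i,j,k}} (η λ η⁻¹)* · (∂ᵣf/∂q^{η*})(q₀ + t λ) dt. -/

import Mathlib

open Quaternion Filter Topology Asymptotics

noncomputable section

/-- The imaginary unit `i` of the real quaternions. -/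
def qI : ℍ[ℝ] := ⟨0, 1, 0, 0⟩
/-- The imaginary unit `j` of the real quaternions. -/
def qJ : ℍ[ℝ] := ⟨0, 0, 1, 0⟩
/-- The imaginary unit `k` of the real quaternions. -/
def qK : ℍ[ℝ] := ⟨0, 0, 0, 1⟩

/-- Quaternion rotation `p ↦ μ p μ⁻¹`. -/
def qRot (μ p : ℍ[ℝ]) : ℍ[ℝ] := μ * p * μ⁻¹

/-- The left GHR derivative `∂f/∂q^μ` at `q`. -/
def lD (f : ℍ[ℝ] → ℍ[ℝ]) (μ q : ℍ[ℝ]) : ℍ[ℝ] :=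
  (4 : ℍ[ℝ])⁻¹ * (fderiv ℝ f q 1 - fderiv ℝ f q qI * qRot μ qI
    - fderiv ℝ f q qJ * qRot μ qJ - fderiv ℝ f q qK * qRot μ qK)

/-- The left conjugate GHR derivative `∂f/∂q^{μ*}` at `q`. -/
def lDc (f : ℍ[ℝ] → ℍ[ℝ]) (μ q : ℍ[ℝ]) : ℍ[ℝ] :=
  (4 : ℍ[ℝ])⁻¹ * (fderiv ℝ f q 1 + fderiv ℝ f q qI * qRot μ qI
    + fderiv ℝ f q qJ * qRot μ qJ + fderiv ℝ f q qK * qRot μ qK)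

/-- The right GHR derivative `∂ᵣf/∂q^μ` at `q`. -/
def rD (f : ℍ[ℝ] → ℍ[ℝ]) (μ q : ℍ[ℝ]) : ℍ[ℝ] :=
  (4 : ℍ[ℝ])⁻¹ * (fderiv ℝ f q 1 - qRot μ qI * fderiv ℝ f q qI
    - qRot μ qJ * fderiv ℝ f q qJ - qRot μ qK * fderiv ℝ f q qK)

/-- The right conjugate GHR derivative `∂ᵣf/∂q^{μ*}` at `q`. -/
def rDc (f : ℍ[ℝ] → ℍ[ℝ]) (μ q : ℍ[ℝ]) : ℍ[ℝ] :=
  (4 : ℍ[ℝ])⁻¹ * (fderiv ℝ f q 1 + qRot μ qI * fderiv ℝ f q qI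
    + qRot μ qJ * fderiv ℝ f q qJ + qRot μ qK * fderiv ℝ f q qK)

@[simp] lemma qI_re : qI.re = 0 := rfl
@[simp] lemma qI_imI : qI.imI = 1 := rfl
@[simp] lemma qI_imJ : qI.imJ = 0 := rfl
@[simp] lemma qI_imK : qI.imK = 0 := rfl
@[simp] lemma qJ_re : qJ.re = 0 := rfl
@[simp] lemma qJ_imI : qJ.imI = 0 := rfl
@[simp] lemma qJ_imJ : qJ.imJ = 1 := rfl
@[simp] lemma qJ_imK : qJ.imK = 0 := rfl
@[simp] lemma qK_re : qK.re = 0 := rfl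
@[simp] lemma qK_imI : qK.imI = 0 := rfl
@[simp] lemma qK_imJ : qK.imJ = 0 := rfl
@[simp] lemma qK_imK : qK.imK = 1 := rfl

lemma qI_inv : qI⁻¹ = -qI := by
  refine inv_eq_of_mul_eq_one_right ?_
  ext <;> simp [Quaternion.re_mul, Quaternion.imI_mul, Quaternion.imJ_mul, Quaternion.imK_mul]

lemma qJ_inv : qJ⁻¹ = -qJ := by
  refine inv_eq_of_mul_eq_one_right ?_
  ext <;> simp [Quaternion.re_mul, Quaternion.imI_mul, Quaternion.imJ_mul, Quaternion.imK_mul]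

lemma qK_inv : qK⁻¹ = -qK := by
  refine inv_eq_of_mul_eq_one_right ?_
  ext <;> simp [Quaternion.re_mul, Quaternion.imI_mul, Quaternion.imJ_mul, Quaternion.imK_mul]

lemma four_inv' : (4 : ℍ[ℝ])⁻¹ = (((4:ℝ)⁻¹ : ℝ) : ℍ[ℝ]) := by
  have h4 : (4:ℍ[ℝ]) = ((4:ℝ):ℍ[ℝ]) := by norm_cast
  refine inv_eq_of_mul_eq_one_right ?_
  rw [h4, ← Quaternion.coe_mul]
  ext <;>
    simp [Quaternion.re_mul, Quaternion.imI_mul, Quaternion.imJ_mul, Quaternion.imK_mul,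
      Quaternion.re_coe, Quaternion.imI_coe, Quaternion.imJ_coe, Quaternion.imK_coe]

set_option maxHeartbeats 2000000 in
lemma key1 (a b c d lam : ℍ[ℝ]) :
    qRot 1 lam * ((4:ℍ[ℝ])⁻¹ * (a - qRot 1 qI * b - qRot 1 qJ * c - qRot 1 qK * d))
      + qRot qI lam * ((4:ℍ[ℝ])⁻¹ * (a - qRot qI qI * b - qRot qI qJ * c - qRot qI qK * d))
      + qRot qJ lam * ((4:ℍ[ℝ])⁻¹ * (a - qRot qJ qI * b - qRot qJ qJ * c - qRot qJ qK * d))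
      + qRot qK lam * ((4:ℍ[ℝ])⁻¹ * (a - qRot qK qI * b - qRot qK qJ * c - qRot qK qK * d))
    = lam.re • a + lam.imI • b + lam.imJ • c + lam.imK • d := by
  simp only [qRot, four_inv', qI_inv, qJ_inv, qK_inv, inv_one]
  ext <;>
    simp only [qI_re, qI_imI, qI_imJ, qI_imK, qJ_re, qJ_imI, qJ_imJ, qJ_imK, qK_re, qK_imI,
      qK_imJ, qK_imK, Quaternion.re_coe, Quaternion.imI_coe, Quaternion.imJ_coe,
      Quaternion.imK_coe, Quaternion.re_mul, Quaternion.imI_mul, Quaternion.imJ_mul,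
      Quaternion.imK_mul, Quaternion.re_neg, Quaternion.imI_neg, Quaternion.imJ_neg,
      Quaternion.imK_neg, Quaternion.re_sub, Quaternion.imI_sub, Quaternion.imJ_sub,
      Quaternion.imK_sub, Quaternion.re_add, Quaternion.imI_add, Quaternion.imJ_add,
      Quaternion.imK_add, Quaternion.re_one, Quaternion.imI_one, Quaternion.imJ_one,
      Quaternion.imK_one, Quaternion.re_smul, Quaternion.imI_smul, Quaternion.imJ_smul,
      Quaternion.imK_smul, smul_eq_mul] <;>
    ring

set_option maxHeartbeats 2000000 in
lemma key2 (a b c d lam : ℍ[ℝ]) :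
    star (qRot 1 lam) * ((4:ℍ[ℝ])⁻¹ * (a + qRot 1 qI * b + qRot 1 qJ * c + qRot 1 qK * d))
      + star (qRot qI lam) * ((4:ℍ[ℝ])⁻¹ * (a + qRot qI qI * b + qRot qI qJ * c + qRot qI qK * d))
      + star (qRot qJ lam) * ((4:ℍ[ℝ])⁻¹ * (a + qRot qJ qI * b + qRot qJ qJ * c + qRot qJ qK * d))
      + star (qRot qK lam) * ((4:ℍ[ℝ])⁻¹ * (a + qRot qK qI * b + qRot qK qJ * c + qRot qK qK * d))
    = lam.re • a + lam.imI • b + lam.imJ • c + lam.imK • d := by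
  simp only [qRot, four_inv', qI_inv, qJ_inv, qK_inv, inv_one]
  ext <;>
    simp only [qI_re, qI_imI, qI_imJ, qI_imK, qJ_re, qJ_imI, qJ_imJ, qJ_imK, qK_re, qK_imI,
      qK_imJ, qK_imK, Quaternion.re_coe, Quaternion.imI_coe, Quaternion.imJ_coe,
      Quaternion.imK_coe, Quaternion.re_mul, Quaternion.imI_mul, Quaternion.imJ_mul,
      Quaternion.imK_mul, Quaternion.re_neg, Quaternion.imI_neg, Quaternion.imJ_neg,
      Quaternion.imK_neg, Quaternion.re_sub, Quaternion.imI_sub, Quaternion.imJ_sub,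
      Quaternion.imK_sub, Quaternion.re_add, Quaternion.imI_add, Quaternion.imJ_add,
      Quaternion.imK_add, Quaternion.re_one, Quaternion.imI_one, Quaternion.imJ_one,
      Quaternion.imK_one, Quaternion.re_smul, Quaternion.imI_smul, Quaternion.imJ_smul,
      Quaternion.imK_smul, Quaternion.re_star, Quaternion.imI_star, Quaternion.imJ_star,
      Quaternion.imK_star, smul_eq_mul] <;>
    ring

lemma decomp (L : ℍ[ℝ] →L[ℝ] ℍ[ℝ]) (lam : ℍ[ℝ]) :
    L lam = lam.re • L 1 + lam.imI • L qI + lam.imJ • L qJ + lam.imK • L qK := by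
  have h : lam = lam.re • (1:ℍ[ℝ]) + lam.imI • qI + lam.imJ • qJ + lam.imK • qK := by
    ext <;> simp [Quaternion.re_smul]
  conv_lhs => rw [h]
  simp [map_add, map_smul]

theorem mean_value_theorem_right_form
    (f : ℍ[ℝ] → ℍ[ℝ]) (U : Set ℍ[ℝ]) (hU : IsOpen U)
    (hf : ContDiffOn ℝ 1 f U) (q₀ q₁ : ℍ[ℝ]) (hq₀ : q₀ ∈ U) (hq₁ : q₁ ∈ U)
    (hseg : segment ℝ q₀ q₁ ⊆ U) :
    (f q₁ - f q₀ = ∫ t in (0:ℝ)..1,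
        (qRot 1 (q₁ - q₀) * rD f 1 (q₀ + t • (q₁ - q₀))
          + qRot qI (q₁ - q₀) * rD f qI (q₀ + t • (q₁ - q₀))
          + qRot qJ (q₁ - q₀) * rD f qJ (q₀ + t • (q₁ - q₀))
          + qRot qK (q₁ - q₀) * rD f qK (q₀ + t • (q₁ - q₀)))) ∧
    (f q₁ - f q₀ = ∫ t in (0:ℝ)..1,
        (star (qRot 1 (q₁ - q₀)) * rDc f 1 (q₀ + t • (q₁ - q₀))
          + star (qRot qI (q₁ - q₀)) * rDc f qI (q₀ + t • (q₁ - q₀))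
          + star (qRot qJ (q₁ - q₀)) * rDc f qJ (q₀ + t • (q₁ - q₀))
          + star (qRot qK (q₁ - q₀)) * rDc f qK (q₀ + t • (q₁ - q₀)))) := by
  set lam := q₁ - q₀ with hlam
  set γ : ℝ → ℍ[ℝ] := fun t => q₀ + t • lam with hγ
  have hmem : ∀ t ∈ Set.uIcc (0:ℝ) 1, γ t ∈ U := by
    intro t ht
    rw [Set.uIcc_of_le (zero_le_one)] at ht
    apply hseg
    rw [segment_eq_image' ℝ q₀ q₁]
    exact ⟨t, ht, rfl⟩
  have hdiff : ∀ x ∈ U, DifferentiableAt ℝ f x := fun x hx =>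
    (hf.differentiableOn one_ne_zero).differentiableAt (hU.mem_nhds hx)
  have hpath : ∀ t : ℝ, HasDerivAt γ lam t := by
    intro t
    have h1 : HasDerivAt (fun s : ℝ => s • lam) lam t := by
      simpa using (hasDerivAt_id t).smul_const lam
    exact h1.const_add q₀
  have hderiv : ∀ t ∈ Set.uIcc (0:ℝ) 1,
      HasDerivAt (fun t => f (γ t)) (fderiv ℝ f (γ t) lam) t := by
    intro t ht
    exact ((hdiff _ (hmem t ht)).hasFDerivAt).comp_hasDerivAt t (hpath t)
  have hcont : ContinuousOn (fun t => fderiv ℝ f (γ t) lam) (Set.uIcc (0:ℝ) 1) := by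
    have h1 : ContinuousOn (fderiv ℝ f) U := hf.continuousOn_fderiv_of_isOpen hU le_rfl
    have h2 : ContinuousOn γ (Set.uIcc (0:ℝ) 1) := by fun_prop
    exact (h1.comp h2 hmem).clm_apply continuousOn_const
  have hint : IntervalIntegrable (fun t => fderiv ℝ f (γ t) lam)
      MeasureTheory.volume 0 1 := hcont.intervalIntegrable
  have ftc : ∫ t in (0:ℝ)..1, fderiv ℝ f (γ t) lam = f q₁ - f q₀ := by
    have := intervalIntegral.integral_eq_sub_of_hasDerivAt hderiv hint
    simpa [hγ, hlam] using this
  constructor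
  · rw [← ftc]
    refine intervalIntegral.integral_congr fun t ht => ?_
    simp only [rD]
    rw [key1, ← decomp]
  · rw [← ftc]
    refine intervalIntegral.integral_congr fun t ht => ?_
    simp only [rDc]
    rw [key2, ← decomp]

end
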